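/- A graph G admits an orientation with all outdegrees at most 1 if and only if G is a sidewalk, i.e., every connected component of G contains at most one cycle. -/

import Mathlib

open SimpleGraph Set Function

def IsOrientation {V : Type*} (G : SimpleGraph V) (o : V → V → Prop) : Prop :=
  ∀ x y, G.Adj x y ↔ (o x y ∨ o y x)

/-- A sidewalk (pseudoforest): each connected component contains at most one
cycle, i.e. any two cycles within the same component have the same edges. -/
def IsSidewalk {V : Type*} (G : SimpleGraph V) : Prop :=
  ∀ ⦃u v : V⦄ (c₁ : G.Walk u u) (c₂ : G.Walk v v),
    c₁.IsCycle → c₂.IsCycle → G.Reachable u v →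
      {e | e ∈ c₁.edges} = {e | e ∈ c₂.edges}

namespace SidewalkAux

variable {V : Type*} {G : SimpleGraph V}

lemma closed_decomp {u : V} {c : G.Walk u u} (hc : ¬ c.Nil) :
    u ∈ c.support.tail ∧ c.support.tail.dropLast ++ [u] = c.support.tail := by
  cases c with
  | nil => simp at hc
  | @cons _ w _ h q =>
    have h1 : (Walk.cons h q).support.tail = q.support := by simp
    rw [h1]
    refine ⟨q.end_mem_support, ?_⟩
    have h3 := List.dropLast_append_getLast (l := q.support) (by simp)
    rwa [q.getLast_support] at h3

/-- In a closed nonnil walk, membership in support equals membership in its tail. -/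
lemma mem_tail_iff {u : V} {c : G.Walk u u} (hc : ¬ c.Nil) {z : V} :
    z ∈ c.support ↔ z ∈ c.support.tail := by
  constructor
  · intro hz
    rcases (Walk.mem_support_iff c).1 hz with rfl | h
    · exact (closed_decomp hc).1
    · exact h
  · intro hz
    exact (Walk.mem_support_iff c).2 (Or.inr hz)

/-- The dropLast of the support of a cycle is nodup. -/
lemma dropLast_support_nodup {u : V} {c : G.Walk u u} (hc : c.IsCycle) :
    c.support.dropLast.Nodup := by
  have hnn := hc.not_nil
  have htail : c.support.tail.Nodup := hc.support_nodup
  obtain ⟨-, hdecomp⟩ := closed_decomp hnn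
  have hsupp : c.support = (u :: c.support.tail.dropLast) ++ [u] := by
    have h4 := Walk.support_eq_cons c
    rw [← hdecomp] at h4
    simpa using h4
  rw [hsupp, List.dropLast_concat]
  have h3 : (c.support.tail.dropLast ++ [u]).Nodup := by rw [hdecomp]; exact htail
  rw [List.nodup_append] at h3
  refine List.nodup_cons.2 ⟨?_, h3.1⟩
  intro hu
  exact h3.2.2 u hu u (by simp) rfl

lemma rotate_mem_support [DecidableEq V] {u w : V} {c : G.Walk u u} (hc : c.IsCycle)
    (hw : w ∈ c.support) {z : V} : z ∈ (c.rotate w hw).support ↔ z ∈ c.support := by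
  rw [mem_tail_iff (hc.rotate hw).not_nil, mem_tail_iff hc.not_nil]
  exact (c.support_rotate w hw).mem_iff

/-- Crossing lemma: a walk from inside S to outside S uses an edge crossing S. -/
lemma exists_crossing_edge {S : Set V} {a b : V} (p : G.Walk a b) (ha : a ∈ S) (hb : b ∉ S) :
    ∃ x y, s(x, y) ∈ p.edges ∧ x ∈ S ∧ y ∉ S := by
  induction p with
  | nil => exact absurd ha hb
  | @cons a c b h q ih =>
    by_cases hc : c ∈ S
    · obtain ⟨x, y, hm, hx, hy⟩ := ih hc hb
      exact ⟨x, y, by simp [hm], hx, hy⟩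
    · exact ⟨a, c, by simp, ha, hc⟩


/-! ### Forward direction -/

section Forward

variable {o : V → V → Prop}

open Classical in
/-- The successor function extracted from an orientation. -/
noncomputable def gfun (o : V → V → Prop) (x : V) : V :=
  if h : ∃ y, o x y then h.choose else x

lemma o_gfun {x y : V} (h : o x y) : o x (gfun o x) := by
  unfold gfun
  rw [dif_pos ⟨y, h⟩]
  exact Exists.choose_spec (⟨y, h⟩ : ∃ y, o x y)

variable (hcard : ∀ x, {y | o x y}.encard ≤ 1)

include hcard in
lemma gfun_eq {x y : V} (h : o x y) : gfun o x = y :=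
  Set.encard_le_one_iff.mp (hcard x) _ _ (o_gfun h) h

variable (ho : IsOrientation G o)

include ho in
lemma o_ne {x y : V} (h : o x y) : x ≠ y := by
  intro he
  subst he
  exact G.irrefl ((ho x x).2 (Or.inl h))

section Cycle

variable {u : V} {c : G.Walk u u} (hc : c.IsCycle)

include ho hc in
lemma cycle_edge_choice {e : Sym2 V} (he : e ∈ c.edges) :
    ∃ a b, e = s(a, b) ∧ o a b := by
  induction e with
  | _ a b =>
    have hadj : G.Adj a b := c.adj_of_mem_edges he
    rcases (ho a b).1 hadj with h | h
    · exact ⟨a, b, rfl, h⟩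
    · exact ⟨b, a, Sym2.eq_swap, h⟩

include ho hc hcard in
lemma cycle_exists_out : ∀ x ∈ c.support, o x (gfun o x) ∧ s(x, gfun o x) ∈ c.edges := by
  classical
  intro x hx
  set E := c.edges.toFinset with hE
  set Vt := c.support.tail.toFinset with hVt
  have hEcard : E.card = c.length := by
    rw [hE, List.toFinset_card_of_nodup hc.edges_nodup, Walk.length_edges]
  have hVcard : Vt.card = c.length := by
    rw [hVt, List.toFinset_card_of_nodup hc.support_nodup, List.length_tail,
      Walk.length_support]
    simp
  have hex : ∀ e ∈ E, ∃ pq : V × V, e = s(pq.1, pq.2) ∧ o pq.1 pq.2 := by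
    intro e he
    rw [hE, List.mem_toFinset] at he
    obtain ⟨a, b, hab, hoab⟩ := cycle_edge_choice ho hc he
    exact ⟨(a, b), hab, hoab⟩
  have hfmem : ∀ (e : Sym2 V) (he : e ∈ E), (hex e he).choose.1 ∈ Vt := by
    intro e he
    obtain ⟨h1, h2⟩ := (hex e he).choose_spec
    rw [hVt, List.mem_toFinset, ← mem_tail_iff hc.not_nil]
    apply c.fst_mem_support_of_mem_edges
    rw [← h1]
    rw [hE, List.mem_toFinset] at he
    exact he
  have hfinj : ∀ (e₁ e₂ : Sym2 V) (he₁ : e₁ ∈ E) (he₂ : e₂ ∈ E),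
      (hex e₁ he₁).choose.1 = (hex e₂ he₂).choose.1 → e₁ = e₂ := by
    intro e₁ e₂ he₁ he₂ heq
    obtain ⟨h1, h2⟩ := (hex e₁ he₁).choose_spec
    obtain ⟨h3, h4⟩ := (hex e₂ he₂).choose_spec
    rw [h1, h3, ← gfun_eq hcard h2, ← gfun_eq hcard h4, heq]
  have hsurj := Finset.surj_on_of_inj_on_of_card_le (fun e he => (hex e he).choose.1)
    hfmem hfinj (le_of_eq (hVcard.trans hEcard.symm))
  have hxVt : x ∈ Vt := by
    rw [hVt, List.mem_toFinset, ← mem_tail_iff hc.not_nil]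
    exact hx
  obtain ⟨e, he, hxe'⟩ := hsurj x hxVt
  have hxe : x = (hex e he).choose.1 := hxe'
  obtain ⟨h1, h2⟩ := (hex e he).choose_spec
  rw [← hxe] at h1 h2
  have hg := gfun_eq hcard h2
  rw [hg]
  refine ⟨h2, ?_⟩
  rw [← h1]
  rw [hE, List.mem_toFinset] at he
  exact he

include ho hcard hc in
lemma cycle_edge_eq {e : Sym2 V} (he : e ∈ c.edges) :
    ∃ x ∈ c.support, e = s(x, gfun o x) := by
  obtain ⟨a, b, hab, hoab⟩ := cycle_edge_choice ho hc he
  refine ⟨a, ?_, by rw [hab, gfun_eq hcard hoab]⟩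
  apply c.fst_mem_support_of_mem_edges
  rw [← hab]; exact he

include ho hcard hc in
lemma cycle_psi_inj {x x' : V} (hx : x ∈ c.support) (hx' : x' ∈ c.support)
    (hxy : s(x, gfun o x) = s(x', gfun o x')) : x = x' := by
  classical
  set E := c.edges.toFinset with hE
  set Vt := c.support.tail.toFinset with hVt
  have hEcard : E.card = c.length := by
    rw [hE, List.toFinset_card_of_nodup hc.edges_nodup, Walk.length_edges]
  have hVcard : Vt.card = c.length := by
    rw [hVt, List.toFinset_card_of_nodup hc.support_nodup, List.length_tail,
      Walk.length_support]
    simp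
  have hmemVt : ∀ z, z ∈ c.support ↔ z ∈ Vt := by
    intro z
    rw [hVt, List.mem_toFinset, ← mem_tail_iff hc.not_nil]
  have hf : ∀ (a : V), a ∈ Vt → s(a, gfun o a) ∈ E := by
    intro a ha
    rw [hE, List.mem_toFinset]
    exact (cycle_exists_out hcard ho hc a ((hmemVt a).2 ha)).2
  have hsurj : ∀ e ∈ E, ∃ a ha, (fun (a : V) (_ : a ∈ Vt) => s(a, gfun o a)) a ha = e := by
    intro e he
    rw [hE, List.mem_toFinset] at he
    obtain ⟨a, ha, hae⟩ := cycle_edge_eq hcard ho hc he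
    exact ⟨a, (hmemVt a).1 ha, hae.symm⟩
  have hinj := Finset.inj_on_of_surj_on_of_card_le
    (fun (a : V) (_ : a ∈ Vt) => s(a, gfun o a)) hf hsurj
    (le_of_eq (hVcard.trans hEcard.symm))
  exact hinj ((hmemVt x).1 hx) ((hmemVt x').1 hx') hxy

include hc in
lemma cycle_three_edges {z : V} {e₁ e₂ e₃ : Sym2 V} (h₁ : e₁ ∈ c.edges) (h₂ : e₂ ∈ c.edges)
    (h₃ : e₃ ∈ c.edges) (h12 : e₁ ≠ e₂) (h13 : e₁ ≠ e₃) (h23 : e₂ ≠ e₃)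
    (hz₁ : z ∈ e₁) (hz₂ : z ∈ e₂) (hz₃ : z ∈ e₃) : False := by
  have hdart : ∀ {e : Sym2 V}, e ∈ c.edges → z ∈ e →
      ∃ d ∈ c.darts, d.edge = e ∧ (d.fst = z ∨ d.snd = z) := by
    intro e he hze
    obtain ⟨d, hd, hde⟩ := List.mem_map.1 he
    refine ⟨d, hd, hde, ?_⟩
    rw [← hde] at hze
    rcases Sym2.mem_iff.1 hze with h | h
    · exact Or.inl h.symm
    · exact Or.inr h.symm
  obtain ⟨d₁, hd₁, he₁, hc₁⟩ := hdart h₁ hz₁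
  obtain ⟨d₂, hd₂, he₂, hc₂⟩ := hdart h₂ hz₂
  obtain ⟨d₃, hd₃, he₃, hc₃⟩ := hdart h₃ hz₃
  have hfst : ∀ {d d' : G.Dart}, d ∈ c.darts → d' ∈ c.darts → d.fst = z → d'.fst = z → d = d' := by
    intro d d' hd hd' h h'
    have hnd : (c.darts.map (·.fst)).Nodup := by
      rw [Walk.map_fst_darts]
      exact dropLast_support_nodup hc
    exact List.inj_on_of_nodup_map hnd hd hd' (h.trans h'.symm)
  have hsnd : ∀ {d d' : G.Dart}, d ∈ c.darts → d' ∈ c.darts → d.snd = z → d'.snd = z → d = d' := by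
    intro d d' hd hd' h h'
    have hnd : (c.darts.map (·.snd)).Nodup := by
      rw [Walk.map_snd_darts]
      exact hc.support_nodup
    exact List.inj_on_of_nodup_map hnd hd hd' (h.trans h'.symm)
  rcases hc₁ with h1 | h1 <;> rcases hc₂ with h2 | h2 <;> rcases hc₃ with h3 | h3
  · exact h12 (he₁ ▸ he₂ ▸ congrArg Dart.edge (hfst hd₁ hd₂ h1 h2))
  · exact h12 (he₁ ▸ he₂ ▸ congrArg Dart.edge (hfst hd₁ hd₂ h1 h2))
  · exact h13 (he₁ ▸ he₃ ▸ congrArg Dart.edge (hfst hd₁ hd₃ h1 h3))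
  · exact h23 (he₂ ▸ he₃ ▸ congrArg Dart.edge (hsnd hd₂ hd₃ h2 h3))
  · exact h23 (he₂ ▸ he₃ ▸ congrArg Dart.edge (hfst hd₂ hd₃ h2 h3))
  · exact h13 (he₁ ▸ he₃ ▸ congrArg Dart.edge (hsnd hd₁ hd₃ h1 h3))
  · exact h12 (he₁ ▸ he₂ ▸ congrArg Dart.edge (hsnd hd₁ hd₂ h1 h2))
  · exact h12 (he₁ ▸ he₂ ▸ congrArg Dart.edge (hsnd hd₁ hd₂ h1 h2))

include ho hcard hc in
lemma cycle_gfun_mem {x : V} (hx : x ∈ c.support) : gfun o x ∈ c.support := by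
  obtain ⟨-, hmem⟩ := cycle_exists_out hcard ho hc x hx
  exact c.snd_mem_support_of_mem_edges hmem

include ho hcard hc in
lemma cycle_g_inj {x x' : V} (hx : x ∈ c.support) (hx' : x' ∈ c.support)
    (hg : gfun o x = gfun o x') : x = x' := by
  by_contra hne
  obtain ⟨hox, hex⟩ := cycle_exists_out hcard ho hc x hx
  obtain ⟨hox', hex'⟩ := cycle_exists_out hcard ho hc x' hx'
  set z := gfun o x with hz
  have hzx' : gfun o x' = z := hg.symm
  have hzsupp : z ∈ c.support := cycle_gfun_mem hcard ho hc hx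
  obtain ⟨hoz, hez⟩ := cycle_exists_out hcard ho hc z hzsupp
  have h12 : s(x, gfun o x) ≠ s(x', gfun o x') := by
    intro h
    exact hne (cycle_psi_inj hcard ho hc hx hx' h)
  have h13 : s(x, gfun o x) ≠ s(z, gfun o z) := by
    intro h
    have hxz := cycle_psi_inj hcard ho hc hx hzsupp h
    exact o_ne ho hox (hxz.trans hz)
  have h23 : s(x', gfun o x') ≠ s(z, gfun o z) := by
    intro h
    have hx'z := cycle_psi_inj hcard ho hc hx' hzsupp h
    exact o_ne ho hox' (hx'z.trans hzx'.symm)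
  exact cycle_three_edges hc hex hex' hez h12 h13 h23
    (Sym2.mem_mk_right x z)
    (by rw [hzx']; exact Sym2.mem_mk_right x' z)
    (Sym2.mem_mk_left z _)

include ho hcard hc in
lemma cycle_iter_mem {x : V} (hx : x ∈ c.support) (n : ℕ) : (gfun o)^[n] x ∈ c.support := by
  induction n with
  | zero => exact hx
  | succ n ih =>
    rw [Function.iterate_succ_apply']
    exact cycle_gfun_mem hcard ho hc ih

include ho hcard hc in
lemma cycle_iter_cancel {x x' : V} (hx : x ∈ c.support) (hx' : x' ∈ c.support) (n : ℕ)
    (h : (gfun o)^[n] x = (gfun o)^[n] x') : x = x' := by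
  induction n with
  | zero => exact h
  | succ n ih =>
    rw [Function.iterate_succ_apply', Function.iterate_succ_apply'] at h
    exact ih (cycle_g_inj hcard ho hc (cycle_iter_mem hcard ho hc hx n)
      (cycle_iter_mem hcard ho hc hx' n) h)

include ho hcard hc in
lemma cycle_period {x : V} (hx : x ∈ c.support) : ∃ m, 0 < m ∧ (gfun o)^[m] x = x := by
  have hfin : {z : V | z ∈ c.support}.Finite := c.support.finite_toSet
  haveI := hfin.to_subtype
  obtain ⟨i, j, hij, hmap⟩ := Finite.exists_ne_map_eq_of_infinite
    (fun n : ℕ => (⟨(gfun o)^[n] x, cycle_iter_mem hcard ho hc hx n⟩ : {z : V | z ∈ c.support}))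
  simp only [Subtype.mk_eq_mk] at hmap
  rcases hij.lt_or_gt with hlt | hlt
  · refine ⟨j - i, by omega, ?_⟩
    have : (gfun o)^[i] ((gfun o)^[j-i] x) = (gfun o)^[i] x := by
      rw [← Function.iterate_add_apply]
      rw [show i + (j - i) = j by omega]
      exact hmap.symm
    exact cycle_iter_cancel hcard ho hc (cycle_iter_mem hcard ho hc hx _) hx i this
  · refine ⟨i - j, by omega, ?_⟩
    have : (gfun o)^[j] ((gfun o)^[i-j] x) = (gfun o)^[j] x := by
      rw [← Function.iterate_add_apply]
      rw [show j + (i - j) = i by omega]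
      exact hmap
    exact cycle_iter_cancel hcard ho hc (cycle_iter_mem hcard ho hc hx _) hx j this

include ho hcard hc in
lemma cycle_orbit_eq {w : V} (hw : w ∈ c.support) {z : V} (hz : z ∈ c.support) :
    ∃ n, (gfun o)^[n] w = z := by
  classical
  by_contra hno
  push_neg at hno
  set S : Set V := {a | ∃ n, (gfun o)^[n] w = a} with hS
  have hwS : w ∈ S := ⟨0, rfl⟩
  have hzS : z ∉ S := fun ⟨n, hn⟩ => hno n hn
  have hSsupp : S ⊆ {a | a ∈ c.support} := by
    rintro a ⟨n, rfl⟩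
    exact cycle_iter_mem hcard ho hc hw n
  -- a walk from w to z inside the cycle
  have hcrot := hc.rotate hw
  have hzrot : z ∈ (c.rotate w hw).support := by
    rw [mem_tail_iff hcrot.not_nil]
    exact ((c.support_rotate w hw).mem_iff).2 ((mem_tail_iff hc.not_nil).1 hz)
  obtain ⟨a, b, hmem, haS, hbS⟩ :=
    exists_crossing_edge ((c.rotate w hw).takeUntil z hzrot) hwS hzS
  have hmem' : s(a, b) ∈ c.edges := by
    have h1 := (c.rotate w hw).edges_takeUntil_subset hzrot hmem
    exact ((c.rotate_edges w hw).mem_iff).1 h1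
  obtain ⟨t, ht, hte⟩ := cycle_edge_eq hcard ho hc hmem'
  rcases Sym2.eq_iff.1 hte with ⟨h1, h2⟩ | ⟨h1, h2⟩
  · -- a = t, b = gfun t
    obtain ⟨n, hn⟩ := haS
    exact hbS ⟨n + 1, by rw [Function.iterate_succ_apply', hn, h1, ← h2]⟩
  · -- a = gfun t, b = t
    obtain ⟨m, hm0, hmw⟩ := cycle_period hcard ho hc hw
    obtain ⟨n, hn⟩ := haS
    have hNa : (gfun o)^[n + m] w = a := by
      rw [Function.iterate_add_apply, hmw, hn]
    have hbsupp : b ∈ c.support := h2 ▸ ht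
    have hprev : (gfun o)^[n + m - 1] w ∈ c.support := cycle_iter_mem hcard ho hc hw _
    have hgb : gfun o ((gfun o)^[n + m - 1] w) = gfun o b := by
      have h4 : gfun o ((gfun o)^[n + m - 1] w) = (gfun o)^[n + m] w := by
        conv_rhs => rw [show n + m = n + m - 1 + 1 from by omega]
        exact (Function.iterate_succ_apply' _ _ _).symm
      rw [h4, hNa, h1, h2]
    exact hbS ⟨n + m - 1, cycle_g_inj hcard ho hc hprev hbsupp hgb⟩

end Cycle

include ho hcard in
lemma reach_orbit {u : V} {c : G.Walk u u} (hc : c.IsCycle) {a b : V} (p : G.Walk a b)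
    (ha : ∃ n, (gfun o)^[n] a ∈ c.support) : ∃ m, (gfun o)^[m] b ∈ c.support := by
  induction p with
  | nil => exact ha
  | @cons a a' b hadj q ih =>
    apply ih
    rcases (ho a a').1 hadj with h | h
    · -- gfun a = a'
      have hg : gfun o a = a' := gfun_eq hcard h
      obtain ⟨n, hn⟩ := ha
      cases n with
      | zero =>
        refine ⟨0, ?_⟩
        rw [← hg]
        exact cycle_gfun_mem hcard ho hc hn
      | succ n =>
        refine ⟨n, ?_⟩
        rwa [Function.iterate_succ_apply, hg] at hn
    · -- gfun a' = a
      have hg : gfun o a' = a := gfun_eq hcard h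
      obtain ⟨n, hn⟩ := ha
      exact ⟨n + 1, by rwa [Function.iterate_succ_apply, hg]⟩

include ho hcard in
theorem forward_sidewalk : IsSidewalk G := by
  intro u v c₁ c₂ h₁ h₂ hr
  obtain ⟨p⟩ := hr
  obtain ⟨m, hm⟩ := reach_orbit hcard ho h₁ p ⟨0, c₁.start_mem_support⟩
  set w := (gfun o)^[m] v with hw
  have hw2 : w ∈ c₂.support := cycle_iter_mem hcard ho h₂ c₂.start_mem_support m
  ext e
  simp only [Set.mem_setOf_eq]
  constructor
  · intro he
    obtain ⟨t, ht, rfl⟩ := cycle_edge_eq hcard ho h₁ he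
    obtain ⟨n, hn⟩ := cycle_orbit_eq hcard ho h₁ hm ht
    have ht2 : t ∈ c₂.support := by
      rw [← hn]
      exact cycle_iter_mem hcard ho h₂ hw2 n
    exact (cycle_exists_out hcard ho h₂ t ht2).2
  · intro he
    obtain ⟨t, ht, rfl⟩ := cycle_edge_eq hcard ho h₂ he
    obtain ⟨n, hn⟩ := cycle_orbit_eq hcard ho h₂ hw2 ht
    have ht1 : t ∈ c₁.support := by
      rw [← hn]
      exact cycle_iter_mem hcard ho h₁ hm n
    exact (cycle_exists_out hcard ho h₁ t ht1).2

end Forward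

/-! ### Backward direction: path uniqueness in components -/

section Induce

variable {Γ : SimpleGraph V} {S : Set V}

/-- Push a walk whose support lies in `S` into the induced subgraph on `S`. -/
def toInduce : ∀ {a b : V} (w : Γ.Walk a b) (hw : ∀ z ∈ w.support, z ∈ S),
    (Γ.induce S).Walk ⟨a, hw a w.start_mem_support⟩ ⟨b, hw b w.end_mem_support⟩
  | _, _, Walk.nil, _ => Walk.nil
  | _, _, Walk.cons h q, hw =>
      Walk.cons (by exact h) (toInduce q fun z hz => hw z (by simp [hz]))

lemma toInduce_map : ∀ {a b : V} (w : Γ.Walk a b) (hw : ∀ z ∈ w.support, z ∈ S),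
    (toInduce w hw).map (SimpleGraph.Embedding.induce (G := Γ) S).toHom = w
  | _, _, Walk.nil, _ => rfl
  | _, _, Walk.cons h q, hw => by
      simp only [toInduce, Walk.map_cons]
      exact congrArg (Walk.cons h) (toInduce_map q _)

lemma toInduce_support : ∀ {a b : V} (w : Γ.Walk a b) (hw : ∀ z ∈ w.support, z ∈ S),
    (toInduce w hw).support.map Subtype.val = w.support
  | _, _, Walk.nil, _ => rfl
  | _, _, Walk.cons h q, hw => by
      simp only [toInduce, Walk.support_cons, List.map_cons]
      exact congrArg (List.cons _) (toInduce_support q _)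

lemma toInduce_isPath {a b : V} {w : Γ.Walk a b} (hw : ∀ z ∈ w.support, z ∈ S)
    (hp : w.IsPath) : (toInduce w hw).IsPath := by
  rw [Walk.isPath_def]
  have h1 : ((toInduce w hw).support.map Subtype.val).Nodup := by
    rw [toInduce_support w hw]
    exact hp.support_nodup
  exact h1.of_map

lemma path_unique_of_no_cycle {x : V}
    (hnc : ∀ z (cc : Γ.Walk z z), cc.IsCycle → Γ.Reachable x z → False)
    {a b : V} (ha : Γ.Reachable x a) {p q : Γ.Walk a b} (hp : p.IsPath) (hq : q.IsPath) :
    p = q := by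
  classical
  set S : Set V := {z | Γ.Reachable x z} with hS
  have hps : ∀ z ∈ p.support, z ∈ S := fun z hz => ha.trans ⟨p.takeUntil z hz⟩
  have hqs : ∀ z ∈ q.support, z ∈ S := fun z hz => ha.trans ⟨q.takeUntil z hz⟩
  have hH : (Γ.induce S).IsAcyclic := by
    intro zz cc hcc
    exact hnc zz.val (cc.map (SimpleGraph.Embedding.induce (G := Γ) S).toHom)
      (hcc.map (SimpleGraph.Embedding.induce (G := Γ) S).injective) zz.property
  have huniq := hH.path_unique ⟨toInduce p hps, toInduce_isPath hps hp⟩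
    ⟨toInduce q hqs, toInduce_isPath hqs hq⟩
  have h2 : toInduce p hps = toInduce q hqs := congrArg Subtype.val huniq
  calc p = @id (Γ.Walk a b) ((toInduce p hps).map (SimpleGraph.Embedding.induce (G := Γ) S).toHom) :=
        (toInduce_map p hps).symm
    _ = @id (Γ.Walk a b) ((toInduce q hqs).map (SimpleGraph.Embedding.induce (G := Γ) S).toHom) := by rw [h2]
    _ = q := toInduce_map q hqs

end Induce

/-! ### Backward direction: construction of the orientation -/

section Backward

variable (G)

/-- Whether a connected component contains a cycle. -/
def HasCyc (K : G.ConnectedComponent) : Prop :=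
  ∃ z, G.connectedComponentMk z = K ∧ ∃ cc : G.Walk z z, cc.IsCycle

noncomputable def cycVert {K : G.ConnectedComponent} (h : HasCyc G K) : V := h.choose

noncomputable def cycWalk {K : G.ConnectedComponent} (h : HasCyc G K) :
    G.Walk (cycVert G h) (cycVert G h) := h.choose_spec.2.choose

lemma cycWalk_isCycle {K : G.ConnectedComponent} (h : HasCyc G K) :
    (cycWalk G h).IsCycle := h.choose_spec.2.choose_spec

lemma cycVert_mk {K : G.ConnectedComponent} (h : HasCyc G K) :
    G.connectedComponentMk (cycVert G h) = K := h.choose_spec.1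

open Classical in
/-- The target set of a component: the support of its chosen cycle, or a chosen root. -/
noncomputable def target (K : G.ConnectedComponent) : Set V :=
  if h : HasCyc G K then {v | v ∈ (cycWalk G h).support} else {Quot.out K}

lemma out_mk (K : G.ConnectedComponent) :
    G.connectedComponentMk (Quot.out K) = K := Quot.out_eq K

lemma target_mk {K : G.ConnectedComponent} {t : V} (ht : t ∈ target G K) :
    G.connectedComponentMk t = K := by
  classical
  by_cases h : HasCyc G K
  · rw [target, dif_pos h] at ht
    have hr : G.Reachable t (cycVert G h) := ((cycWalk G h).takeUntil t ht).reachable.symm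
    rw [← cycVert_mk G h]
    exact ConnectedComponent.sound hr
  · rw [target, dif_neg h] at ht
    rw [ht]
    exact out_mk G K

lemma target_nonempty (x : V) :
    ∃ t, t ∈ target G (G.connectedComponentMk x) ∧ G.Reachable x t := by
  classical
  set K := G.connectedComponentMk x with hK
  by_cases h : HasCyc G K
  · refine ⟨cycVert G h, ?_, ?_⟩
    · rw [target, dif_pos h]
      exact (cycWalk G h).start_mem_support
    · exact ConnectedComponent.exact (hK ▸ (cycVert_mk G h).symm)
  · refine ⟨Quot.out K, ?_, ?_⟩
    · rw [target, dif_neg h]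
      rfl
    · exact ConnectedComponent.exact (hK ▸ (out_mk G K).symm)

/-- Distance of a vertex from the target set of a component. -/
noncomputable def dK (K : G.ConnectedComponent) (x : V) : ℕ :=
  sInf {n | ∃ t, t ∈ target G K ∧ ∃ w : G.Walk x t, w.length = n}

lemma dK_le {K : G.ConnectedComponent} {x t : V} (ht : t ∈ target G K) (w : G.Walk x t) :
    dK G K x ≤ w.length := Nat.sInf_le ⟨t, ht, w, rfl⟩

open Classical in
/-- A chosen path of minimal length from a vertex to the target set. -/
noncomputable def pthSig (K : G.ConnectedComponent) (x : V) : (t : V) × G.Walk x t :=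
  if h : ∃ p : (t : V) × G.Walk x t, p.1 ∈ target G K ∧ p.2.length = dK G K x then
    ⟨h.choose.1, h.choose.2.bypass⟩
  else ⟨x, Walk.nil⟩

/-- The first step toward the target. -/
noncomputable def stepK (K : G.ConnectedComponent) (x : V) : V := (pthSig G K x).2.getVert 1

lemma pthSig_spec {K : G.ConnectedComponent} {x : V} (hx : G.connectedComponentMk x = K) :
    (pthSig G K x).1 ∈ target G K ∧ (pthSig G K x).2.IsPath ∧
      (pthSig G K x).2.length = dK G K x := by
  classical
  obtain ⟨t, ht, hr⟩ := target_nonempty G x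
  rw [hx] at ht
  obtain ⟨w0⟩ := hr
  have hne : {n | ∃ t, t ∈ target G K ∧ ∃ w : G.Walk x t, w.length = n}.Nonempty :=
    ⟨w0.length, t, ht, w0, rfl⟩
  have hmem := Nat.sInf_mem hne
  obtain ⟨t', ht', w', hw'⟩ := hmem
  have hex : ∃ p : (t : V) × G.Walk x t, p.1 ∈ target G K ∧ p.2.length = dK G K x :=
    ⟨⟨t', w'⟩, ht', hw'⟩
  rw [pthSig, dif_pos hex]
  obtain ⟨h1, h2⟩ := hex.choose_spec
  refine ⟨h1, hex.choose.2.bypass_isPath, ?_⟩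
  refine le_antisymm (le_trans hex.choose.2.length_bypass_le (le_of_eq h2)) ?_
  exact dK_le G h1 hex.choose.2.bypass

lemma dK_eq_zero_iff {K : G.ConnectedComponent} {x : V} (hx : G.connectedComponentMk x = K) :
    dK G K x = 0 ↔ x ∈ target G K := by
  constructor
  · intro h0
    obtain ⟨h1, h2, h3⟩ := pthSig_spec G hx
    rw [h0] at h3
    have := (pthSig G K x).2.eq_of_length_eq_zero h3
    rwa [← this] at h1
  · intro ht
    exact Nat.le_zero.mp (dK_le G ht Walk.nil)

lemma pth_not_nil {K : G.ConnectedComponent} {x : V} (hx : G.connectedComponentMk x = K)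
    (hxt : x ∉ target G K) : ¬ (pthSig G K x).2.Nil := by
  obtain ⟨h1, h2, h3⟩ := pthSig_spec G hx
  rw [Walk.not_nil_iff_lt_length, h3]
  rcases Nat.eq_zero_or_pos (dK G K x) with h | h
  · exact absurd ((dK_eq_zero_iff G hx).1 h) hxt
  · exact h

lemma adj_stepK {K : G.ConnectedComponent} {x : V} (hx : G.connectedComponentMk x = K)
    (hxt : x ∉ target G K) : G.Adj x (stepK G K x) :=
  Walk.adj_snd (pth_not_nil G hx hxt)

lemma mem_pth_target {K : G.ConnectedComponent} {x z : V}
    (hx : G.connectedComponentMk x = K) (hz : z ∈ (pthSig G K x).2.support)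
    (hzt : z ∈ target G K) : z = (pthSig G K x).1 := by
  classical
  obtain ⟨h1, h2, h3⟩ := pthSig_spec G hx
  set q := (pthSig G K x).2 with hq
  have htake : dK G K x ≤ (q.takeUntil z hz).length := dK_le G hzt _
  have hsplit := q.take_spec hz
  have hlen : (q.takeUntil z hz).length + (q.dropUntil z hz).length = dK G K x := by
    have h4 := congrArg Walk.length hsplit
    rw [Walk.length_append] at h4
    rw [← h3]
    exact h4
  have hdrop : (q.dropUntil z hz).length = 0 := by omega
  exact (q.dropUntil z hz).eq_of_length_eq_zero hdrop

lemma mem_pth_lt {K : G.ConnectedComponent} {x z : V}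
    (hx : G.connectedComponentMk x = K) (hz : z ∈ (pthSig G K x).2.support)
    (hzx : z ≠ x) : dK G K z < dK G K x := by
  classical
  obtain ⟨h1, h2, h3⟩ := pthSig_spec G hx
  set q := (pthSig G K x).2 with hq
  have hdz : dK G K z ≤ (q.dropUntil z hz).length := dK_le G h1 _
  have hsplit := q.take_spec hz
  have hlen : (q.takeUntil z hz).length + (q.dropUntil z hz).length = dK G K x := by
    have h4 := congrArg Walk.length hsplit
    rw [Walk.length_append] at h4
    rw [← h3]
    exact h4
  have htake : (q.takeUntil z hz).length ≠ 0 := by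
    intro h0
    exact hzx ((q.takeUntil z hz).eq_of_length_eq_zero h0).symm
  omega

open Classical in
/-- The orientation on a component. -/
noncomputable def oK (K : G.ConnectedComponent) (x y : V) : Prop :=
  if h : HasCyc G K then
    if x ∈ (cycWalk G h).support then ∃ d ∈ (cycWalk G h).darts, d.fst = x ∧ d.snd = y
    else y = stepK G K x
  else if x = Quot.out K then False else y = stepK G K x

/-- The global orientation. -/
noncomputable def orient (x y : V) : Prop := oK G (G.connectedComponentMk x) x y

lemma oK_encard (K : G.ConnectedComponent) (x : V) : {y | oK G K x y}.encard ≤ 1 := by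
  classical
  rw [Set.encard_le_one_iff]
  intro a b haa hbb
  rw [Set.mem_setOf_eq] at haa hbb
  unfold oK at haa hbb
  by_cases h : HasCyc G K
  · rw [dif_pos h] at haa hbb
    by_cases hx : x ∈ (cycWalk G h).support
    · rw [if_pos hx] at haa hbb
      obtain ⟨d1, hd1, hf1, hs1⟩ := haa
      obtain ⟨d2, hd2, hf2, hs2⟩ := hbb
      have hnd : ((cycWalk G h).darts.map (·.fst)).Nodup := by
        rw [Walk.map_fst_darts]
        exact dropLast_support_nodup (cycWalk_isCycle G h)
      have hdd := List.inj_on_of_nodup_map hnd hd1 hd2 (hf1.trans hf2.symm)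
      rw [← hs1, ← hs2, hdd]
    · rw [if_neg hx] at haa hbb
      rw [haa, hbb]
  · rw [dif_neg h] at haa hbb
    by_cases hx : x = Quot.out K
    · rw [if_pos hx] at haa
      exact haa.elim
    · rw [if_neg hx] at haa hbb
      rw [haa, hbb]

lemma oK_adj {K : G.ConnectedComponent} {x y : V} (hx : G.connectedComponentMk x = K)
    (h : oK G K x y) : G.Adj x y := by
  classical
  unfold oK at h
  by_cases hcy : HasCyc G K
  · rw [dif_pos hcy] at h
    by_cases hxs : x ∈ (cycWalk G hcy).support
    · rw [if_pos hxs] at h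
      obtain ⟨d, hd, h1, h2⟩ := h
      rw [← h1, ← h2]
      exact d.adj
    · rw [if_neg hxs] at h
      have hxt : x ∉ target G K := by rw [target, dif_pos hcy]; exact hxs
      rw [h]
      exact adj_stepK G hx hxt
  · rw [dif_neg hcy] at h
    by_cases hxo : x = Quot.out K
    · rw [if_pos hxo] at h
      exact h.elim
    · rw [if_neg hxo] at h
      have hxt : x ∉ target G K := by
        rw [target, dif_neg hcy]
        simpa using hxo
      rw [h]
      exact adj_stepK G hx hxt

variable {G}

lemma exists_env (hsw : IsSidewalk G) (K : G.ConnectedComponent) (x : V)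
    (hxK : G.connectedComponentMk x = K) :
    ∃ Γ : SimpleGraph V,
      (∀ a b, G.Adj a b → (a ∉ target G K ∨ b ∉ target G K) → Γ.Adj a b) ∧
      (∀ z (cc : Γ.Walk z z), cc.IsCycle → Γ.Reachable x z → False) ∧
      (∀ t₁, t₁ ∈ target G K → ∀ t₂, t₂ ∈ target G K →
        ∃ P : Γ.Walk t₁ t₂, ∀ z ∈ P.support, z ∈ target G K) := by
  classical
  by_cases hcy : HasCyc G K
  · -- cyclic component: delete one fixed edge of the cycle
    set c := cycWalk G hcy with hcdef
    have hcyc : c.IsCycle := cycWalk_isCycle G hcy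
    have htar : target G K = {v | v ∈ c.support} := by rw [target, dif_pos hcy]
    have hedne : c.edges ≠ [] := by
      apply List.ne_nil_of_length_pos
      rw [Walk.length_edges]
      have := hcyc.three_le_length
      omega
    set e₀ := c.edges.head hedne with he₀def
    have he₀ : e₀ ∈ c.edges := List.head_mem hedne
    have hsuppmem : ∀ (e : Sym2 V), e ∈ c.edges → ∀ v ∈ e, v ∈ c.support := by
      intro e he
      induction e with
      | _ a b =>
        intro v hv
        rcases Sym2.mem_iff.1 hv with rfl | rfl
        · exact c.fst_mem_support_of_mem_edges he
        · exact c.snd_mem_support_of_mem_edges he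
    refine ⟨G.deleteEdges {e₀}, ?_, ?_, ?_⟩
    · intro a b hab hnt
      rw [SimpleGraph.deleteEdges_adj]
      refine ⟨hab, ?_⟩
      intro hmem
      rw [Set.mem_singleton_iff] at hmem
      rcases hnt with hnt | hnt
      · exact hnt (by rw [htar]; exact hsuppmem e₀ he₀ a (hmem ▸ Sym2.mem_mk_left a b))
      · exact hnt (by rw [htar]; exact hsuppmem e₀ he₀ b (hmem ▸ Sym2.mem_mk_right a b))
    · intro z cc hcc hr
      have hccedges : ∀ e ∈ cc.edges, e ∈ G.edgeSet := by
        intro e he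
        have h1 := cc.edges_subset_edgeSet he
        rw [SimpleGraph.edgeSet_deleteEdges] at h1
        exact h1.1
      have hccG : (cc.transfer G hccedges).IsCycle := hcc.transfer _
      have hrzx : G.Reachable x z := (hr.mono (G.deleteEdges_le {e₀})).symm.symm
      have hreach : G.Reachable z (cycVert G hcy) := by
        apply ConnectedComponent.exact
        rw [cycVert_mk G hcy, ← hxK]
        exact ConnectedComponent.sound hrzx.symm
      have hsets := hsw (cc.transfer G hccedges) c hccG hcyc hreach
      have he₀cc : e₀ ∈ cc.edges := by
        have h2 : e₀ ∈ {e | e ∈ (cc.transfer G hccedges).edges} := by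
          rw [hsets]
          exact he₀
        rwa [Set.mem_setOf_eq, Walk.edges_transfer] at h2
      have h3 := cc.edges_subset_edgeSet he₀cc
      rw [SimpleGraph.edgeSet_deleteEdges] at h3
      exact h3.2 rfl
    · intro t₁ ht₁ t₂ ht₂
      rw [htar, Set.mem_setOf_eq] at ht₁ ht₂
      set c' := c.rotate t₁ ht₁ with hc'def
      have hc' : c'.IsCycle := hcyc.rotate ht₁
      have ht₂' : t₂ ∈ c'.support := (rotate_mem_support hcyc ht₁).2 ht₂
      set u₁ := c'.takeUntil t₂ ht₂' with hu₁
      set u₂ := c'.dropUntil t₂ ht₂' with hu₂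
      have hsplit := c'.take_spec ht₂'
      have h5 : u₁.edges ++ u₂.edges = c'.edges := by
        have h6 := congrArg Walk.edges hsplit
        rwa [Walk.edges_append] at h6
      have hnodup : c'.edges.Nodup := hc'.edges_nodup
      have hdisj : ∀ e, e ∈ u₁.edges → e ∈ u₂.edges → False := by
        rw [← h5] at hnodup
        rw [List.nodup_append] at hnodup
        intro e h1 h2
        exact hnodup.2.2 e h1 e h2 rfl
      have hceq : ∀ e ∈ c'.edges, e ∈ G.edgeSet ∧ e ∈ c.edges := by
        intro e he
        have h7 : e ∈ c.edges := ((c.rotate_edges t₁ ht₁).mem_iff).1 he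
        exact ⟨c.edges_subset_edgeSet h7, h7⟩
      by_cases hcase : e₀ ∈ u₁.edges
      · -- use u₂ reversed
        have hnot : ∀ e ∈ u₂.edges, e ≠ e₀ := fun e he heq =>
          hdisj e (heq ▸ hcase) he
        have htrans : ∀ e ∈ u₂.reverse.edges, e ∈ (G.deleteEdges {e₀}).edgeSet := by
          intro e he
          rw [Walk.edges_reverse, List.mem_reverse] at he
          rw [SimpleGraph.edgeSet_deleteEdges]
          refine ⟨(hceq e (h5 ▸ List.mem_append_right _ he)).1, ?_⟩
          rw [Set.mem_singleton_iff]
          exact hnot e he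
        refine ⟨u₂.reverse.transfer _ htrans, ?_⟩
        intro z hz
        rw [Walk.support_transfer, Walk.support_reverse, List.mem_reverse] at hz
        rw [htar, Set.mem_setOf_eq]
        exact (rotate_mem_support hcyc ht₁).1 (c'.support_dropUntil_subset ht₂' hz)
      · have htrans : ∀ e ∈ u₁.edges, e ∈ (G.deleteEdges {e₀}).edgeSet := by
          intro e he
          rw [SimpleGraph.edgeSet_deleteEdges]
          refine ⟨(hceq e (h5 ▸ List.mem_append_left _ he)).1, ?_⟩
          rw [Set.mem_singleton_iff]
          intro heq
          exact hcase (heq ▸ he)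
        refine ⟨u₁.transfer _ htrans, ?_⟩
        intro z hz
        rw [Walk.support_transfer] at hz
        rw [htar, Set.mem_setOf_eq]
        exact (rotate_mem_support hcyc ht₁).1 (c'.support_takeUntil_subset ht₂' hz)
  · -- acyclic component: the graph itself works
    refine ⟨G, fun a b h _ => h, ?_, ?_⟩
    · intro z cc hcc hr
      exact hcy ⟨z, by rw [← hxK]; exact (ConnectedComponent.sound hr.symm), cc, hcc⟩
    · intro t₁ ht₁ t₂ ht₂
      rw [target, dif_neg hcy, Set.mem_singleton_iff] at ht₁ ht₂
      subst ht₁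
      subst ht₂
      refine ⟨Walk.nil, ?_⟩
      intro z hz
      rw [Walk.support_nil, List.mem_singleton] at hz
      rw [hz, target, dif_neg hcy]
      rfl

lemma pth_edges_mem {K : G.ConnectedComponent} {w : V} (hw : G.connectedComponentMk w = K)
    {Γ : SimpleGraph V}
    (hΓ1 : ∀ a b, G.Adj a b → (a ∉ target G K ∨ b ∉ target G K) → Γ.Adj a b) :
    ∀ e ∈ (pthSig G K w).2.edges, e ∈ Γ.edgeSet := by
  intro e he
  revert he
  induction e with
  | _ a b =>
    intro he
    have hadj := (pthSig G K w).2.adj_of_mem_edges he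
    have ha := (pthSig G K w).2.fst_mem_support_of_mem_edges he
    have hb := (pthSig G K w).2.snd_mem_support_of_mem_edges he
    rw [SimpleGraph.mem_edgeSet]
    by_cases hat : a ∈ target G K
    · by_cases hbt : b ∈ target G K
      · have h1 := mem_pth_target G hw ha hat
        have h2 := mem_pth_target G hw hb hbt
        exact absurd (h1.trans h2.symm) hadj.ne
      · exact hΓ1 a b hadj (Or.inr hbt)
    · exact hΓ1 a b hadj (Or.inl hat)

lemma descend (hsw : IsSidewalk G) {K : G.ConnectedComponent} {x y : V}
    (hxK : G.connectedComponentMk x = K) (hyK : G.connectedComponentMk y = K)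
    (hadj : G.Adj x y) (hxt : x ∉ target G K) (hle : dK G K y ≤ dK G K x) :
    y = stepK G K x := by
  classical
  obtain ⟨Γ, hΓ1, hΓ2, hΓ3⟩ := exists_env hsw K x hxK
  obtain ⟨hpx1, hpx2, hpx3⟩ := pthSig_spec G hxK
  obtain ⟨hpy1, hpy2, hpy3⟩ := pthSig_spec G hyK
  have hxy_ne : x ≠ y := hadj.ne
  have hdx_pos : 0 < dK G K x := by
    rcases Nat.eq_zero_or_pos (dK G K x) with h | h
    · exact absurd ((dK_eq_zero_iff G hxK).1 h) hxt
    · exact h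
  have hxnotpy : x ∉ (pthSig G K y).2.support := by
    intro hmem
    have := mem_pth_lt G hyK hmem hxy_ne
    omega
  have hpxΓ := pth_edges_mem hxK hΓ1
  have hpyΓ := pth_edges_mem hyK hΓ1
  set pxG := (pthSig G K x).2.transfer Γ hpxΓ with hpxGdef
  set pyG := (pthSig G K y).2.transfer Γ hpyΓ with hpyGdef
  have hadjxy' : G.Adj x (stepK G K x) := adj_stepK G hxK hxt
  rcases Nat.lt_or_ge (dK G K y) (dK G K x) with hdy | hdy
  · -- descending case : show y = stepK
    by_contra hne'
    -- the tail of the chosen path for x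
    have hnn := pth_not_nil G hxK hxt
    set w1 := (pthSig G K x).2.tail with hw1def
    have hdecomp := (pthSig G K x).2.cons_tail_eq hnn
    have h6 := congrArg Walk.edges hdecomp
    rw [Walk.edges_cons] at h6
    have hw1edges : ∀ e ∈ w1.edges, e ∈ Γ.edgeSet := by
      intro e he
      exact hpxΓ e (h6 ▸ List.mem_cons_of_mem _ he)
    have hsuppw1 : x :: w1.support = (pthSig G K x).2.support :=
      (pthSig G K x).2.cons_support_tail hnn
    have hxnotw1 : x ∉ w1.support := by
      have h7 := hpx2.support_nodup
      rw [← hsuppw1] at h7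
      exact (List.nodup_cons.1 h7).1
    set w1G := w1.transfer Γ hw1edges with hw1Gdef
    obtain ⟨P', hP'supp⟩ := hΓ3 (pthSig G K x).1 hpx1 (pthSig G K y).1 hpy1
    set P2' := (w1G.append P').append pyG.reverse with hP2'def
    set P2 := P2'.bypass with hP2def
    have hP2path : P2.IsPath := P2'.bypass_isPath
    have hxP2 : x ∉ P2.support := by
      intro hmem
      have h8 := P2'.support_bypass_subset hmem
      rw [hP2'def] at h8
      rw [Walk.mem_support_append_iff, Walk.mem_support_append_iff] at h8
      rcases h8 with (h8 | h8) | h8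
      · rw [hw1Gdef, Walk.support_transfer] at h8
        exact hxnotw1 h8
      · exact hxt (hP'supp x h8)
      · rw [Walk.support_reverse, List.mem_reverse, hpyGdef, Walk.support_transfer] at h8
        exact hxnotpy h8
    have hadj1 : Γ.Adj (stepK G K x) x := hΓ1 _ _ hadjxy'.symm (Or.inr hxt)
    have hadj2 : Γ.Adj x y := hΓ1 _ _ hadj (Or.inl hxt)
    set P1 := Walk.cons hadj1 (Walk.cons hadj2 Walk.nil) with hP1def
    have hP1path : P1.IsPath := by
      rw [hP1def, Walk.isPath_def]
      simp only [Walk.support_cons, Walk.support_nil]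
      refine List.nodup_cons.2 ⟨?_, List.nodup_cons.2 ⟨?_, List.nodup_singleton y⟩⟩
      · intro hmem
        rcases List.mem_cons.1 hmem with h9 | h9
        · exact hadjxy'.ne' h9
        · rw [List.mem_singleton] at h9
          exact hne' h9.symm
      · rw [List.mem_singleton]
        exact hxy_ne
    have hreach : Γ.Reachable x (stepK G K x) := (hΓ1 _ _ hadjxy' (Or.inl hxt)).reachable
    have huniq : P1 = P2 := path_unique_of_no_cycle hΓ2 hreach hP1path hP2path
    have hxP1 : x ∈ P1.support := by
      rw [hP1def]
      simp
    rw [huniq] at hxP1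
    exact hxP2 hxP1
  · -- equal distance case : impossible
    exfalso
    have hdeq : dK G K y = dK G K x := le_antisymm hle hdy
    have hadjyx : Γ.Adj y x := hΓ1 _ _ hadj.symm (Or.inr hxt)
    set P1 := Walk.cons hadjyx pxG with hP1def
    have hP1path : P1.IsPath := by
      rw [hP1def, Walk.cons_isPath_iff]
      refine ⟨hpx2.transfer _, ?_⟩
      intro hmem
      rw [hpxGdef, Walk.support_transfer] at hmem
      have := mem_pth_lt G hxK hmem hxy_ne.symm
      omega
    obtain ⟨P', hP'supp⟩ := hΓ3 (pthSig G K y).1 hpy1 (pthSig G K x).1 hpx1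
    set P2 := (pyG.append P').bypass with hP2def
    have hP2path : P2.IsPath := (pyG.append P').bypass_isPath
    have hxP2 : x ∉ P2.support := by
      intro hmem
      have h8 := (pyG.append P').support_bypass_subset hmem
      rw [Walk.mem_support_append_iff] at h8
      rcases h8 with h8 | h8
      · rw [hpyGdef, Walk.support_transfer] at h8
        exact hxnotpy h8
      · exact hxt (hP'supp x h8)
    have hxP1 : x ∈ P1.support := by
      rw [hP1def, Walk.support_cons]
      apply List.mem_cons_of_mem
      rw [hpxGdef, Walk.support_transfer]
      exact (pthSig G K x).2.start_mem_support
    have hreach : Γ.Reachable x y := (hΓ1 _ _ hadj (Or.inl hxt)).reachable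
    have huniq : P1 = P2 := path_unique_of_no_cycle hΓ2 hreach hP1path hP2path
    rw [huniq] at hxP1
    exact hxP2 hxP1

lemma cover_aux (hsw : IsSidewalk G) {K : G.ConnectedComponent} {x y : V}
    (hxK : G.connectedComponentMk x = K) (hyK : G.connectedComponentMk y = K)
    (hadj : G.Adj x y) (hle : dK G K y ≤ dK G K x) : oK G K x y ∨ oK G K y x := by
  classical
  by_cases hcy : HasCyc G K
  · have htar : target G K = {v | v ∈ (cycWalk G hcy).support} := by rw [target, dif_pos hcy]
    by_cases hxt : x ∈ target G K
    · -- both endpoints on the cycle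
      have hx0 : dK G K x = 0 := (dK_eq_zero_iff G hxK).2 hxt
      have hy0 : dK G K y = 0 := by omega
      have hyt : y ∈ target G K := (dK_eq_zero_iff G hyK).1 hy0
      have hxs : x ∈ (cycWalk G hcy).support := by rwa [htar] at hxt
      have hys : y ∈ (cycWalk G hcy).support := by rwa [htar] at hyt
      have hedge : s(x, y) ∈ (cycWalk G hcy).edges := by
        by_contra hch
        set c := cycWalk G hcy with hcdef
        set p0 := (c.dropUntil x hxs).append (c.takeUntil y hys) with hp0def
        set p' := p0.bypass with hp'def
        have hp'edges : ∀ e ∈ p'.edges, e ∈ c.edges := by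
          intro e he
          have h1 := p0.edges_bypass_subset he
          rw [hp0def, Walk.edges_append] at h1
          rcases List.mem_append.1 h1 with h2 | h2
          · exact c.edges_dropUntil_subset hxs h2
          · exact c.edges_takeUntil_subset hys h2
        have hnotmem : s(y, x) ∉ p'.edges := by
          intro hmem
          apply hch
          have h3 := hp'edges _ hmem
          rwa [Sym2.eq_swap] at h3
        have hcyc2 : (Walk.cons hadj.symm p').IsCycle :=
          (Walk.cons_isCycle_iff p' hadj.symm).2 ⟨p0.bypass_isPath, hnotmem⟩
        have hreach : G.Reachable (cycVert G hcy) y := ⟨c.takeUntil y hys⟩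
        have hsets := hsw c (Walk.cons hadj.symm p') (cycWalk_isCycle G hcy) hcyc2 hreach
        have hmem2 : s(y, x) ∈ {e | e ∈ (Walk.cons hadj.symm p').edges} := by
          rw [Set.mem_setOf_eq, Walk.edges_cons]
          exact List.mem_cons_self
        rw [← hsets] at hmem2
        rw [Set.mem_setOf_eq] at hmem2
        apply hch
        rwa [Sym2.eq_swap] at hmem2
      obtain ⟨d, hd, hde⟩ := List.mem_map.1 hedge
      rcases Sym2.eq_iff.1 hde with ⟨h1, h2⟩ | ⟨h1, h2⟩
      · left
        unfold oK
        rw [dif_pos hcy, if_pos hxs]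
        exact ⟨d, hd, h1, h2⟩
      · right
        unfold oK
        rw [dif_pos hcy, if_pos hys]
        exact ⟨d, hd, h1, h2⟩
    · left
      have hstep := descend hsw hxK hyK hadj hxt hle
      unfold oK
      rw [dif_pos hcy, if_neg (by rwa [htar] at hxt)]
      exact hstep
  · by_cases hxt : x ∈ target G K
    · exfalso
      have hx0 : dK G K x = 0 := (dK_eq_zero_iff G hxK).2 hxt
      have hy0 : dK G K y = 0 := by omega
      have hyt : y ∈ target G K := (dK_eq_zero_iff G hyK).1 hy0
      rw [target, dif_neg hcy, Set.mem_singleton_iff] at hxt hyt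
      exact hadj.ne (hxt.trans hyt.symm)
    · left
      have hstep := descend hsw hxK hyK hadj hxt hle
      unfold oK
      rw [dif_neg hcy, if_neg ?_]
      · exact hstep
      · intro h
        apply hxt
        rw [target, dif_neg hcy]
        exact Set.mem_singleton_iff.2 h

theorem backward_orientation (hsw : IsSidewalk G) :
    IsOrientation G (orient G) ∧ ∀ x, {y | orient G x y}.encard ≤ 1 := by
  constructor
  · intro x y
    constructor
    · intro hadj
      have hyx : G.connectedComponentMk y = G.connectedComponentMk x :=
        (SimpleGraph.ConnectedComponent.connectedComponentMk_eq_of_adj hadj).symm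
      unfold orient
      rw [hyx]
      rcases le_total (dK G (G.connectedComponentMk x) y) (dK G (G.connectedComponentMk x) x)
        with hle | hle
      · exact cover_aux hsw rfl hyx hadj hle
      · exact Or.symm (cover_aux hsw hyx rfl hadj.symm hle)
    · intro h
      rcases h with h | h
      · exact oK_adj G rfl h
      · exact (oK_adj G rfl h).symm
  · intro x
    exact oK_encard G _ x

end Backward

end SidewalkAux

/-- `G` admits an orientation with all outdegrees at most 1 iff `G` is a sidewalk. -/
theorem one_orientable_iff_sidewalk {V : Type*} (G : SimpleGraph V) :
    (∃ o : V → V → Prop, IsOrientation G o ∧ ∀ x, {y | o x y}.encard ≤ 1) ↔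
      IsSidewalk G := by
  constructor
  · rintro ⟨o, ho, hcard⟩
    exact SidewalkAux.forward_sidewalk hcard ho
  · intro hsw
    obtain ⟨h1, h2⟩ := SidewalkAux.backward_orientation hsw
    exact ⟨SidewalkAux.orient G, h1, h2⟩
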